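/- Let m ≥ 1, let κ be a Markov kernel from ℝ^m to a measurable output space Ω, and let ε ≥ 0, δ ≥ 0, λ ≥ 0, η ≥ 0. Let f_i, f_j, f̃_i, f̃_j be probability measures on ℝ^m. Suppose: (1) for every measurable S ⊆ Ω, (f̃_i.bind κ)(S) ≤ e^ε · (f̃_j.bind κ)(S) + δ, where μ.bind κ is the measure S ↦ ∫ κ(t)(S) dμ(t); and (2) for each θ ∈ {i, j} and every measurable A ⊆ ℝ^m, both f_θ(A) ≤ e^λ · f̃_θ(A) + η and f̃_θ(A) ≤ e^λ · f_θ(A) + η (i.e., the η-approximate max-divergences between f_θ and f̃_θ in both directions are at most λ). Then for every measurable S ⊆ Ω, (f_i.bind κ)(S) ≤ e^{ε + 2λ} · (f_j.bind κ)(S) + (1 + e^{ε + λ})·η + e^λ·δ. -/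

import Mathlib

open MeasureTheory ProbabilityTheory Set

lemma aux_bind_le {α Ω : Type*} [MeasurableSpace α] [MeasurableSpace Ω]
    (κ : Kernel α Ω) [IsMarkovKernel κ] (μ ν : Measure α)
    [IsProbabilityMeasure μ] [IsProbabilityMeasure ν]
    (c η : ℝ) (hc : 0 ≤ c) (hη : 0 ≤ η)
    (h : ∀ A : Set α, MeasurableSet A → μ A ≤ ENNReal.ofReal c * ν A + ENNReal.ofReal η)
    (S : Set Ω) (hS : MeasurableSet S) :
    (μ.bind fun t => κ t) S ≤ ENNReal.ofReal c * (ν.bind fun t => κ t) S + ENNReal.ofReal η := by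
  have hκm : Measurable fun a => κ a S := κ.measurable_coe hS
  set f : α → ℝ := fun a => (κ a S).toReal with hf
  have hfm : Measurable f := hκm.ennreal_toReal
  have hne : ∀ a, κ a S ≠ ⊤ := fun a => (measure_lt_top _ _).ne
  have hofr : ∀ a, ENNReal.ofReal (f a) = κ a S := fun a => ENNReal.ofReal_toReal (hne a)
  have hle1 : ∀ a, f a ≤ 1 := fun a => by
    simpa using ENNReal.toReal_mono (by norm_num) (prob_le_one (μ := κ a) (s := S))
  have hnn : ∀ a, 0 ≤ f a := fun a => ENNReal.toReal_nonneg
  have hmeasset : ∀ t : ℝ, MeasurableSet {a | t < f a} := fun t =>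
    measurableSet_lt measurable_const hfm
  have key : ∀ (ρ : Measure α), ρ.bind (fun t => κ t) S = ∫⁻ t in Ioi (0:ℝ), ρ {a | t < f a} := by
    intro ρ
    rw [Measure.bind_apply hS (κ.measurable.aemeasurable)]
    rw [show (∫⁻ a, κ a S ∂ρ) = ∫⁻ a, ENNReal.ofReal (f a) ∂ρ by
      exact lintegral_congr fun a => (hofr a).symm]
    exact lintegral_eq_lintegral_meas_lt ρ (Filter.Eventually.of_forall hnn) hfm.aemeasurable
  rw [key μ, key ν]
  calc ∫⁻ t in Ioi (0:ℝ), μ {a | t < f a}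
      ≤ ∫⁻ t in Ioi (0:ℝ), (ENNReal.ofReal c * ν {a | t < f a}
          + (Ioc (0:ℝ) 1).indicator (fun _ => ENNReal.ofReal η) t) := by
        apply setLIntegral_mono' measurableSet_Ioi
        intro t ht
        by_cases ht1 : t ≤ 1
        · rw [indicator_of_mem (show t ∈ Ioc (0:ℝ) 1 from ⟨ht, ht1⟩)]
          exact h _ (hmeasset t)
        · have : {a | t < f a} = ∅ := by
            ext a; simp only [mem_setOf_eq, mem_empty_iff_false, iff_false, not_lt]
            exact (hle1 a).trans (le_of_not_ge ht1)
          rw [this]; simp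
    _ = ENNReal.ofReal c * (∫⁻ t in Ioi (0:ℝ), ν {a | t < f a}) + ENNReal.ofReal η := by
        have hmono : Measurable fun t : ℝ => ν {a | t < f a} :=
          Antitone.measurable fun s t hst => measure_mono fun a ha => lt_of_le_of_lt hst ha
        have hind : ∫⁻ t in Ioi (0:ℝ),
            (Ioc (0:ℝ) 1).indicator (fun _ => ENNReal.ofReal η) t = ENNReal.ofReal η := by
          rw [lintegral_indicator measurableSet_Ioc,
            Measure.restrict_restrict measurableSet_Ioc]
          simp [Ioc_inter_Ioi, Real.volume_Ioc]
        rw [lintegral_add_right _ (measurable_const.indicator measurableSet_Ioc),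
          lintegral_const_mul _ hmono, hind]

/-- **Privacy under approximations with max-divergence** (Theorem 4.6): if the
mechanism (a Markov kernel `κ`) is `(ε, δ)`-private for the approximating
distributions `f̃ᵢ, f̃ⱼ`, and the `η`-approximate max-divergences between each true
distribution `f_θ` and its approximation `f̃_θ` are at most `λ` in both directions,
then the mechanism is `(ε + 2λ, (1 + e^{ε+λ})η + e^λ δ)`-private for the true
distributions `fᵢ, fⱼ`. -/
theorem privacy_under_maxdiv_approximations
    {Ω : Type*} [MeasurableSpace Ω] (m : ℕ) (hm : 1 ≤ m)
    (κ : Kernel (Fin m → ℝ) Ω) [IsMarkovKernel κ]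
    (ε δ lam η : ℝ) (hε : 0 ≤ ε) (hδ : 0 ≤ δ) (hlam : 0 ≤ lam) (hη : 0 ≤ η)
    (fi fj fti ftj : Measure (Fin m → ℝ))
    (hfi : IsProbabilityMeasure fi) (hfj : IsProbabilityMeasure fj)
    (hfti : IsProbabilityMeasure fti) (hftj : IsProbabilityMeasure ftj)
    (h1 : ∀ S : Set Ω, MeasurableSet S →
      (fti.bind fun t => κ t) S
        ≤ ENNReal.ofReal (Real.exp ε) * (ftj.bind fun t => κ t) S
          + ENNReal.ofReal δ)
    (h2i : ∀ A : Set (Fin m → ℝ), MeasurableSet A →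
      fi A ≤ ENNReal.ofReal (Real.exp lam) * fti A + ENNReal.ofReal η ∧
      fti A ≤ ENNReal.ofReal (Real.exp lam) * fi A + ENNReal.ofReal η)
    (h2j : ∀ A : Set (Fin m → ℝ), MeasurableSet A →
      fj A ≤ ENNReal.ofReal (Real.exp lam) * ftj A + ENNReal.ofReal η ∧
      ftj A ≤ ENNReal.ofReal (Real.exp lam) * fj A + ENNReal.ofReal η) :
    ∀ S : Set Ω, MeasurableSet S →
      (fi.bind fun t => κ t) S
        ≤ ENNReal.ofReal (Real.exp (ε + 2 * lam)) * (fj.bind fun t => κ t) S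
          + ENNReal.ofReal ((1 + Real.exp (ε + lam)) * η + Real.exp lam * δ) := by
  intro S hS
  have hA := aux_bind_le κ fi fti (Real.exp lam) η (Real.exp_pos lam).le hη
    (fun A hA => (h2i A hA).1) S hS
  have hC := aux_bind_le κ ftj fj (Real.exp lam) η (Real.exp_pos lam).le hη
    (fun A hA => (h2j A hA).2) S hS
  have hB := h1 S hS
  set a := ENNReal.ofReal (Real.exp lam) with ha
  set b := ENNReal.ofReal (Real.exp ε) with hb
  set F := (fj.bind fun t => κ t) S with hF
  have step : (fi.bind fun t => κ t) S
      ≤ a * (b * (a * F + ENNReal.ofReal η) + ENNReal.ofReal δ) + ENNReal.ofReal η := by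
    refine hA.trans ?_
    gcongr
    exact hB.trans (by gcongr)
  refine step.trans (le_of_eq ?_)
  have key1 : a * b * a = ENNReal.ofReal (Real.exp (ε + 2 * lam)) := by
    rw [ha, hb, ← ENNReal.ofReal_mul (Real.exp_pos lam).le,
      ← ENNReal.ofReal_mul (by positivity), ← Real.exp_add, ← Real.exp_add]
    ring_nf
  have key2 : a * b * ENNReal.ofReal η + (a * ENNReal.ofReal δ + ENNReal.ofReal η)
      = ENNReal.ofReal ((1 + Real.exp (ε + lam)) * η + Real.exp lam * δ) := by
    rw [ha, hb, ← ENNReal.ofReal_mul (Real.exp_pos lam).le,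
      ← ENNReal.ofReal_mul (by positivity), ← ENNReal.ofReal_mul (Real.exp_pos lam).le,
      ← ENNReal.ofReal_add (by positivity) hη, ← ENNReal.ofReal_add (by positivity) (by positivity)]
    congr 1
    rw [Real.exp_add]
    ring
  calc a * (b * (a * F + ENNReal.ofReal η) + ENNReal.ofReal δ) + ENNReal.ofReal η
      = a * b * a * F + (a * b * ENNReal.ofReal η + (a * ENNReal.ofReal δ + ENNReal.ofReal η)) := by
        ring
    _ = ENNReal.ofReal (Real.exp (ε + 2 * lam)) * F
        + ENNReal.ofReal ((1 + Real.exp (ε + lam)) * η + Real.exp lam * δ) := by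
        rw [key1, key2]
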